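/- Let Z be a type of examples and f : ℝ^d × Z → ℝ a loss such that for every ξ ∈ Z the map x ↦ f(x; ξ) is convex, M-Lipschitz, differentiable and L-smooth. Let S = (ξ_1,…,ξ_n) and S' = (ξ'_1,…,ξ'_n) be two n-tuples of examples (n ≥ 1) that agree in all but at most one coordinate. Let I_1,…,I_K be i.i.d. random indices uniformly distributed on {1,…,n}, let step sizes satisfy 0 ≤ α_k ≤ 2/L, and from a common deterministic start x_1 = x'_1 define coupled SGD iterates x_{k+1} = x_k − α_k ∇f(x_k; ξ_{I_k}) and x'_{k+1} = x'_k − α_k ∇f(x'_k; ξ'_{I_k}) for k = 1,…,K. Then for every ξ ∈ Z, E[|f(x_{K+1}; ξ) − f(x'_{K+1}; ξ)|] ≤ (2M²/n) ∑_{k=1}^K α_k. -/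

import Mathlib

open MeasureTheory ProbabilityTheory InnerProductSpace intervalIntegral

section Aux

variable {E : Type*} [NormedAddCommGroup E] [InnerProductSpace ℝ E] [CompleteSpace E]

lemma line_hasDerivAt (g : E → ℝ) (hg : Differentiable ℝ g) (a v : E) (t : ℝ) :
    HasDerivAt (fun s : ℝ => g (a + s • v)) (inner ℝ (gradient g (a + t • v)) v : ℝ) t := by
  have h1 : HasFDerivAt g (toDual ℝ E (gradient g (a + t • v))) (a + t • v) :=
    hasGradientAt_iff_hasFDerivAt.mp (hg _).hasGradientAt
  have h2 : HasDerivAt (fun s : ℝ => a + s • v) v t := by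
    simpa using ((hasDerivAt_id t).smul_const v).const_add a
  have h3 := h1.comp_hasDerivAt t h2
  rw [InnerProductSpace.toDual_apply_apply] at h3
  exact h3


lemma convex_first_order (g : E → ℝ) (hg : Differentiable ℝ g)
    (hc : ConvexOn ℝ Set.univ g) (a b : E) :
    g a + (inner ℝ (gradient g a) (b - a) : ℝ) ≤ g b := by
  have hφc : ConvexOn ℝ Set.univ (fun t : ℝ => g (a + t • (b - a))) := by
    have h := hc.comp_affineMap (AffineMap.lineMap a b)
    have he : (fun t : ℝ => g (a + t • (b - a))) = g ∘ (AffineMap.lineMap a b) := by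
      funext t; simp [AffineMap.lineMap_apply, add_comm]
    rw [he]
    simpa using h
  have hd : HasDerivAt (fun t : ℝ => g (a + t • (b - a))) (inner ℝ (gradient g a) (b - a) : ℝ) 0 := by
    simpa using line_hasDerivAt g hg a (b - a) 0
  have h := hφc.le_slope_of_hasDerivAt (Set.mem_univ 0) (Set.mem_univ 1) one_pos hd
  rw [slope_def_field] at h
  simp at h
  have e : (inner ℝ (gradient g a) (b - a) : ℝ) = fderiv ℝ g a b - fderiv ℝ g a a := by
    rw [gradient, InnerProductSpace.toDual_symm_apply, map_sub]
  linarith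


lemma norm_gradient_le (g : E → ℝ) (M : ℝ) (hM : 0 ≤ M)
    (hlip : ∀ x y, |g x - g y| ≤ M * ‖x - y‖) (x : E) : ‖gradient g x‖ ≤ M := by
  have hl : LipschitzWith (Real.toNNReal M) g := by
    apply LipschitzWith.of_dist_le_mul
    intro a b
    rw [Real.dist_eq, dist_eq_norm, Real.coe_toNNReal _ hM]
    exact hlip a b
  have h := norm_fderiv_le_of_lipschitz (𝕜 := ℝ) (x₀ := x) hl
  rw [Real.coe_toNNReal _ hM] at h
  calc ‖gradient g x‖ = ‖fderiv ℝ g x‖ := LinearIsometryEquiv.norm_map _ _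
  _ ≤ M := h


lemma hasGradientAt_sub_inner (g : E → ℝ) (hg : Differentiable ℝ g) (v z : E) :
    HasGradientAt (fun z => g z - (inner ℝ v z : ℝ)) (gradient g z - v) z := by
  have h1 : HasFDerivAt g (toDual ℝ E (gradient g z)) z :=
    hasGradientAt_iff_hasFDerivAt.mp (hg _).hasGradientAt
  have h2 : HasFDerivAt (fun z => (inner ℝ v z : ℝ)) (toDual ℝ E v) z := by
    have : (fun z : E => (inner ℝ v z : ℝ)) = ⇑(toDual ℝ E v) := by
      funext w; simp [InnerProductSpace.toDual_apply_apply]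
    rw [this]
    exact (toDual ℝ E v).hasFDerivAt
  have h3 := hasFDerivAt_iff_hasGradientAt.mp (h1.sub h2)
  rw [← map_sub, LinearIsometryEquiv.symm_apply_apply] at h3
  exact h3


lemma gradient_continuous_of_lip (g : E → ℝ) (L : ℝ) (hL : 0 ≤ L)
    (hs : ∀ a b, ‖gradient g a - gradient g b‖ ≤ L * ‖a - b‖) :
    Continuous (gradient g) := by
  have : LipschitzWith (Real.toNNReal L) (gradient g) := by
    apply LipschitzWith.of_dist_le_mul
    intro a b
    rw [dist_eq_norm, dist_eq_norm, Real.coe_toNNReal _ hL]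
    exact hs a b
  exact this.continuous


lemma descent_lemma (g : E → ℝ) (L : ℝ) (hL : 0 ≤ L) (hg : Differentiable ℝ g)
    (hs : ∀ a b, ‖gradient g a - gradient g b‖ ≤ L * ‖a - b‖) (a b : E) :
    g b ≤ g a + (inner ℝ (gradient g a) (b - a) : ℝ) + L / 2 * ‖b - a‖ ^ 2 := by
  set v := b - a with hv
  set φ' : ℝ → ℝ := fun t => (inner ℝ (gradient g (a + t • v)) v : ℝ) with hφ'
  have hder : ∀ t : ℝ, HasDerivAt (fun s : ℝ => g (a + s • v)) (φ' t) t := fun t =>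
    line_hasDerivAt g hg a v t
  have hcont : Continuous φ' :=
    ((gradient_continuous_of_lip g L hL hs).comp (by continuity)).inner continuous_const
  have hint : (∫ t in (0:ℝ)..1, φ' t) = g (a + (1:ℝ) • v) - g (a + (0:ℝ) • v) :=
    integral_eq_sub_of_hasDerivAt (fun t _ => hder t) (hcont.intervalIntegrable 0 1)
  have hb : ∀ t ∈ Set.Icc (0:ℝ) 1, φ' t ≤ φ' 0 + (L * ‖v‖ ^ 2) * t := by
    intro t ht
    have h1 : φ' t - φ' 0 = (inner ℝ (gradient g (a + t • v) - gradient g (a + (0:ℝ) • v)) v : ℝ) := by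
      rw [inner_sub_left]
    have h2 : φ' t - φ' 0 ≤ L * t * ‖v‖ ^ 2 := by
      rw [h1]
      calc (inner ℝ (gradient g (a + t • v) - gradient g (a + (0:ℝ) • v)) v : ℝ)
          ≤ ‖gradient g (a + t • v) - gradient g (a + (0:ℝ) • v)‖ * ‖v‖ := real_inner_le_norm _ _
        _ ≤ (L * ‖(a + t • v) - (a + (0:ℝ) • v)‖) * ‖v‖ := by
            gcongr; exact hs _ _
        _ = L * t * ‖v‖ ^ 2 := by
            simp [norm_smul, abs_of_nonneg ht.1]; ring
    nlinarith [h2]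
  have hmono : (∫ t in (0:ℝ)..1, φ' t) ≤ ∫ t in (0:ℝ)..1, (φ' 0 + (L * ‖v‖ ^ 2) * t) := by
    apply integral_mono_on zero_le_one (hcont.intervalIntegrable 0 1)
      ((continuous_const.add (continuous_const.mul continuous_id)).intervalIntegrable 0 1) hb
  have hval : (∫ t in (0:ℝ)..1, (φ' 0 + (L * ‖v‖ ^ 2) * t)) = φ' 0 + L / 2 * ‖v‖ ^ 2 := by
    have h1 : IntervalIntegrable (fun t : ℝ => (L * ‖v‖ ^ 2) * t) MeasureTheory.volume 0 1 := by
      apply Continuous.intervalIntegrable; continuity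
    rw [integral_add intervalIntegrable_const h1, intervalIntegral.integral_const_mul, integral_id]
    simp; ring
  have hφ0 : φ' 0 = (inner ℝ (gradient g a) v : ℝ) := by simp [hφ']
  have hab : a + (1:ℝ) • v = b := by simp [hv]
  have ha0 : a + (0:ℝ) • v = a := by simp
  rw [hab, ha0] at hint
  rw [hval, hφ0] at hmono
  linarith [hint ▸ hmono]


lemma coco (g : E → ℝ) (L : ℝ) (hL : 0 < L) (hg : Differentiable ℝ g)
    (hc : ConvexOn ℝ Set.univ g)
    (hs : ∀ a b, ‖gradient g a - gradient g b‖ ≤ L * ‖a - b‖) (a b : E) :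
    ‖gradient g a - gradient g b‖ ^ 2 ≤ L * (inner ℝ (gradient g a - gradient g b) (a - b) : ℝ) := by
  have key : ∀ p q : E, g p + (inner ℝ (gradient g p) (q - p) : ℝ)
      + 1 / (2 * L) * ‖gradient g q - gradient g p‖ ^ 2 ≤ g q := by
    intro p q
    set v := gradient g p with hv
    set h : E → ℝ := fun z => g z - (inner ℝ v z : ℝ) with hh
    have hh_diff : Differentiable ℝ h := fun z =>
      (hasGradientAt_sub_inner g hg v z).differentiableAt
    have hh_grad : ∀ z, gradient h z = gradient g z - v := fun z =>
      (hasGradientAt_sub_inner g hg v z).gradient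
    have hh_smooth : ∀ z w, ‖gradient h z - gradient h w‖ ≤ L * ‖z - w‖ := by
      intro z w; rw [hh_grad, hh_grad]
      simpa [sub_sub_sub_cancel_right] using hs z w
    have hmin : ∀ z, h p ≤ h z := by
      intro z
      have h0 := convex_first_order g hg hc p z
      rw [inner_sub_right] at h0
      simp only [hh]
      linarith
    set w := gradient h q with hw
    have hdesc := descent_lemma h L hL.le hh_diff hh_smooth q (q - (1 / L) • w)
    have e1 : (q - (1 / L) • w) - q = -((1 / L) • w) := by abel
    have e2 : (inner ℝ w (-((1 / L) • w)) : ℝ) = -(1 / L) * ‖w‖ ^ 2 := by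
      rw [inner_neg_right, real_inner_smul_right, real_inner_self_eq_norm_sq]; ring
    have e3 : ‖-((1 / L) • w)‖ ^ 2 = (1 / L) ^ 2 * ‖w‖ ^ 2 := by
      rw [norm_neg, norm_smul, mul_pow, Real.norm_eq_abs, sq_abs]
    rw [e1] at hdesc
    rw [hh_grad] at hdesc
    rw [hw, hh_grad] at e2 e3 hdesc
    have hL' : L ≠ 0 := ne_of_gt hL
    have hchain : h p ≤ h q - 1 / (2 * L) * ‖gradient g q - v‖ ^ 2 := by
      have hm := hmin (q - (1 / L) • (gradient g q - v))
      rw [e2, e3] at hdesc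
      have hL'' := hL.ne'
      have heq : L / 2 * ((1 / L) ^ 2 * ‖gradient g q - v‖ ^ 2)
          = 1 / (2 * L) * ‖gradient g q - v‖ ^ 2 := by
        field_simp
      have heq2 : (1 / L) * ‖gradient g q - v‖ ^ 2
          = 2 * (1 / (2 * L) * ‖gradient g q - v‖ ^ 2) := by
        field_simp
      linarith [hm, hdesc, heq, heq2]
    simp only [hh] at hchain
    rw [inner_sub_right] at *
    linarith
  have h1 := key a b
  have h2 := key b a
  set u := gradient g a with hu
  set w := gradient g b with hww
  rw [show ‖w - u‖ = ‖u - w‖ from norm_sub_rev _ _] at h1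
  set X := (inner ℝ u (b - a) : ℝ) with hX
  set Y := (inner ℝ w (a - b) : ℝ) with hY
  set c := ‖u - w‖ ^ 2 with hcc
  have e1 : (inner ℝ (u - w) (a - b) : ℝ) = -X - Y := by
    rw [inner_sub_left]
    have h3 : (inner ℝ u (a - b) : ℝ) = -X := by
      rw [hX, show a - b = -(b - a) by abel, inner_neg_right]
    rw [h3, hY]
  have hXY : X + Y ≤ -(1 / L) * c := by
    have ht : 1 / (2 * L) + 1 / (2 * L) = 1 / L := by
      rw [← add_div, show (1:ℝ)+1 = 2 by norm_num, div_eq_div_iff (by positivity) hL.ne']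
      ring
    have ht' : 1 / (2 * L) * c + 1 / (2 * L) * c = 1 / L * c := by rw [← add_mul, ht]
    linarith [h1, h2, ht']
  calc c = L * ((1 / L) * c) := by field_simp
    _ ≤ L * (-(X + Y)) := by
        apply mul_le_mul_of_nonneg_left _ hL.le
        linarith
    _ = L * (inner ℝ (u - w) (a - b) : ℝ) := by rw [e1]; ring


lemma nonexp (g : E → ℝ) (L : ℝ) (hL : 0 < L) (hg : Differentiable ℝ g)
    (hc : ConvexOn ℝ Set.univ g)
    (hs : ∀ a b, ‖gradient g a - gradient g b‖ ≤ L * ‖a - b‖)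
    (α : ℝ) (hα0 : 0 ≤ α) (hα2 : α ≤ 2 / L) (a b : E) :
    ‖(a - α • gradient g a) - (b - α • gradient g b)‖ ≤ ‖a - b‖ := by
  set u := a - b with hu
  set w := gradient g a - gradient g b with hw
  have hrw : (a - α • gradient g a) - (b - α • gradient g b) = u - α • w := by
    simp only [hu, hw, smul_sub]; abel
  have hsq : ‖u - α • w‖ ^ 2 = ‖u‖ ^ 2 - 2 * α * (inner ℝ w u : ℝ) + α ^ 2 * ‖w‖ ^ 2 := by
    rw [norm_sub_sq_real, real_inner_smul_right, norm_smul, real_inner_comm, mul_pow, Real.norm_eq_abs, sq_abs]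
    ring
  have hc1 := coco g L hL hg hc hs a b
  have hiu : (0:ℝ) ≤ (inner ℝ w u : ℝ) := by nlinarith [sq_nonneg ‖w‖]
  have hαL : α * L ≤ 2 := by rwa [le_div_iff₀ hL] at hα2
  have hle : ‖u - α • w‖ ^ 2 ≤ ‖u‖ ^ 2 := by
    nlinarith [hc1, hiu, hαL, sq_nonneg α, mul_nonneg hα0 hiu, mul_nonneg (mul_nonneg hα0 hα0) hiu]
  rw [hrw]
  have := Real.sqrt_le_sqrt hle
  rwa [Real.sqrt_sq (norm_nonneg _), Real.sqrt_sq (norm_nonneg _)] at this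

end Aux

/-- Uniform stability of SGD for convex, `M`-Lipschitz, `L`-smooth losses:
coupled SGD runs on neighboring datasets `S`, `S'` satisfy
`E[|f(x_{K+1}; ξ) − f(x'_{K+1}; ξ)|] ≤ (2M²/n) ∑_{k=1}^K α_k`. -/
theorem sgd_stability_convex {d : ℕ} {Z : Type*}
    (f : EuclideanSpace ℝ (Fin d) → Z → ℝ) (M L : ℝ) (hM : 0 < M) (hL : 0 < L)
    (hconv : ∀ ξ, ConvexOn ℝ Set.univ (fun x => f x ξ))
    (hlip : ∀ ξ x y, |f x ξ - f y ξ| ≤ M * ‖x - y‖)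
    (hdiff : ∀ ξ, Differentiable ℝ (fun x => f x ξ))
    (hsmooth : ∀ ξ x y,
      ‖gradient (fun z => f z ξ) x - gradient (fun z => f z ξ) y‖ ≤ L * ‖x - y‖)
    (n : ℕ) (hn : 1 ≤ n) (S S' : Fin n → Z)
    (j₀ : Fin n) (hSS' : ∀ i, i ≠ j₀ → S i = S' i)
    {Ω : Type*} {mΩ : MeasurableSpace Ω} (P : Measure Ω) [IsProbabilityMeasure P]
    (I : ℕ → Ω → Fin n)
    (hI_meas : ∀ k, Measurable (I k))
    (hI_indep : iIndepFun I P)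
    (hI_unif : ∀ k (i : Fin n), P {ω | I k ω = i} = (n : ENNReal)⁻¹)
    (K : ℕ) (α : ℕ → ℝ) (hα0 : ∀ k, 0 ≤ α k) (hα2 : ∀ k, α k ≤ 2 / L)
    (x x' : ℕ → Ω → EuclideanSpace ℝ (Fin d)) (x1 : EuclideanSpace ℝ (Fin d))
    (hx1 : ∀ ω, x 1 ω = x1) (hx1' : ∀ ω, x' 1 ω = x1)
    (hrec : ∀ k, 1 ≤ k → k ≤ K → ∀ ω,
      x (k + 1) ω = x k ω - α k • gradient (fun z => f z (S (I k ω))) (x k ω))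
    (hrec' : ∀ k, 1 ≤ k → k ≤ K → ∀ ω,
      x' (k + 1) ω = x' k ω - α k • gradient (fun z => f z (S' (I k ω))) (x' k ω)) :
    ∀ ξ : Z, ∫ ω, |f (x (K + 1) ω) ξ - f (x' (K + 1) ω) ξ| ∂P
      ≤ (2 * M ^ 2 / n) * ∑ k ∈ Finset.Icc 1 K, α k := by
  have npos : (0:ℝ) < (n:ℝ) := by exact_mod_cast Nat.lt_of_lt_of_le Nat.zero_lt_one hn
  -- gradient norm bound
  have hGnorm : ∀ (ζ : Z) (v : EuclideanSpace ℝ (Fin d)),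
      ‖gradient (fun z => f z ζ) v‖ ≤ M := fun ζ v =>
    norm_gradient_le _ M hM.le (hlip ζ) v
  -- measurability of one update step
  have hmeas_step : ∀ (u : Ω → EuclideanSpace ℝ (Fin d)) (k : ℕ) (T : Fin n → Z),
      Measurable u →
      Measurable (fun ω => u ω - α k • gradient (fun z => f z (T (I k ω))) (u ω)) := by
    intro u k T hu
    have hG : ∀ i : Fin n, Continuous (fun v : EuclideanSpace ℝ (Fin d) =>
        gradient (fun z => f z (T i)) v) :=
      fun i => gradient_continuous_of_lip _ L hL.le (hsmooth (T i))
    have h1 : Measurable (fun ω => gradient (fun z => f z (T (I k ω))) (u ω)) := by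
      have he : (fun ω => gradient (fun z => f z (T (I k ω))) (u ω))
          = fun ω => ∑ i : Fin n,
              if I k ω = i then gradient (fun z => f z (T i)) (u ω) else 0 := by
        funext ω
        rw [Finset.sum_ite_eq]
        simp
      rw [he]
      apply Finset.measurable_sum
      intro i _
      exact Measurable.ite (hI_meas k (measurableSet_singleton i))
        ((hG i).measurable.comp hu) measurable_const
    exact hu.sub (h1.const_smul (α k))
  -- pointwise one-step contraction bound
  have hstep : ∀ k, 1 ≤ k → k ≤ K → ∀ ω,
      ‖x (k+1) ω - x' (k+1) ω‖ ≤ ‖x k ω - x' k ω‖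
        + (if I k ω = j₀ then 2 * M * α k else 0) := by
    intro k hk1 hkK ω
    rw [hrec k hk1 hkK ω, hrec' k hk1 hkK ω]
    by_cases hj : I k ω = j₀
    · rw [if_pos hj]
      set a := x k ω with ha
      set b := x' k ω with hb
      set ζ := S (I k ω) with hζ
      set ζ' := S' (I k ω) with hζ'
      have htri : (a - α k • gradient (fun z => f z ζ) a)
            - (b - α k • gradient (fun z => f z ζ') b)
          = ((a - α k • gradient (fun z => f z ζ) a)
              - (b - α k • gradient (fun z => f z ζ) b))
            + (α k • gradient (fun z => f z ζ') b - α k • gradient (fun z => f z ζ) b) := by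
        abel
      rw [htri]
      have h1 : ‖(a - α k • gradient (fun z => f z ζ) a)
          - (b - α k • gradient (fun z => f z ζ) b)‖ ≤ ‖a - b‖ :=
        nonexp _ L hL (hdiff ζ) (hconv ζ) (hsmooth ζ) (α k) (hα0 k) (hα2 k) a b
      have h2 : ‖α k • gradient (fun z => f z ζ') b - α k • gradient (fun z => f z ζ) b‖
          ≤ 2 * M * α k := by
        rw [← smul_sub, norm_smul, Real.norm_eq_abs, abs_of_nonneg (hα0 k)]
        have h3 : ‖gradient (fun z => f z ζ') b - gradient (fun z => f z ζ) b‖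
            ≤ 2 * M := by
          calc ‖gradient (fun z => f z ζ') b - gradient (fun z => f z ζ) b‖
              ≤ ‖gradient (fun z => f z ζ') b‖ + ‖gradient (fun z => f z ζ) b‖ :=
                norm_sub_le _ _
            _ ≤ M + M := add_le_add (hGnorm ζ' b) (hGnorm ζ b)
            _ = 2 * M := by ring
        calc α k * ‖gradient (fun z => f z ζ') b - gradient (fun z => f z ζ) b‖
            ≤ α k * (2 * M) := mul_le_mul_of_nonneg_left h3 (hα0 k)
          _ = 2 * M * α k := by ring
      calc ‖((a - α k • gradient (fun z => f z ζ) a)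
              - (b - α k • gradient (fun z => f z ζ) b))
            + (α k • gradient (fun z => f z ζ') b - α k • gradient (fun z => f z ζ) b)‖
          ≤ ‖(a - α k • gradient (fun z => f z ζ) a)
              - (b - α k • gradient (fun z => f z ζ) b)‖
            + ‖α k • gradient (fun z => f z ζ') b - α k • gradient (fun z => f z ζ) b‖ :=
            norm_add_le _ _
        _ ≤ ‖a - b‖ + 2 * M * α k := add_le_add h1 h2
    · rw [if_neg hj, hSS' _ hj, add_zero]
      exact nonexp _ L hL (hdiff (S' (I k ω))) (hconv (S' (I k ω))) (hsmooth (S' (I k ω)))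
        (α k) (hα0 k) (hα2 k) _ _
  -- main induction
  have main : ∀ m, m ≤ K → Measurable (x (m+1)) ∧ Measurable (x' (m+1)) ∧
      (∀ ω, ‖x (m+1) ω - x' (m+1) ω‖ ≤ 2 * M * ∑ j ∈ Finset.Icc 1 m, α j) ∧
      ∫ ω, ‖x (m+1) ω - x' (m+1) ω‖ ∂P ≤ (2 * M / n) * ∑ j ∈ Finset.Icc 1 m, α j := by
    intro m
    induction m with
    | zero =>
      intro _
      have hxe : x 1 = fun _ => x1 := funext hx1
      have hxe' : x' 1 = fun _ => x1 := funext hx1'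
      have hIcc : Finset.Icc 1 0 = (∅ : Finset ℕ) := by decide
      refine ⟨by rw [hxe]; exact measurable_const, by rw [hxe']; exact measurable_const, ?_, ?_⟩
      · intro ω
        simp [hx1 ω, hx1' ω, hIcc]
      · have hz : (fun ω => ‖x 1 ω - x' 1 ω‖) = fun _ => (0:ℝ) :=
          funext fun ω => by simp [hx1 ω, hx1' ω]
        rw [hz]
        simp [hIcc]
    | succ m ih =>
      intro hm1K
      obtain ⟨hxm, hx'm, hbd, hint⟩ := ih (le_trans (Nat.le_succ m) hm1K)
      have hk1 : 1 ≤ m + 1 := Nat.succ_le_succ (Nat.zero_le m)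
      have hkK : m + 1 ≤ K := hm1K
      have hxm1 : Measurable (x (m+1+1)) := by
        have he : x (m+1+1) = fun ω =>
            x (m+1) ω - α (m+1) • gradient (fun z => f z (S (I (m+1) ω))) (x (m+1) ω) :=
          funext (hrec (m+1) hk1 hkK)
        rw [he]; exact hmeas_step (x (m+1)) (m+1) S hxm
      have hx'm1 : Measurable (x' (m+1+1)) := by
        have he : x' (m+1+1) = fun ω =>
            x' (m+1) ω - α (m+1) • gradient (fun z => f z (S' (I (m+1) ω))) (x' (m+1) ω) :=
          funext (hrec' (m+1) hk1 hkK)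
        rw [he]; exact hmeas_step (x' (m+1)) (m+1) S' hx'm
      have hsum_succ : ∑ j ∈ Finset.Icc 1 (m+1), α j
          = (∑ j ∈ Finset.Icc 1 m, α j) + α (m+1) :=
        Finset.sum_Icc_succ_top hk1 α
      have hbd1 : ∀ ω, ‖x (m+1+1) ω - x' (m+1+1) ω‖
          ≤ 2 * M * ∑ j ∈ Finset.Icc 1 (m+1), α j := by
        intro ω
        have h := hstep (m+1) hk1 hkK ω
        have hif : (if I (m+1) ω = j₀ then 2 * M * α (m+1) else 0) ≤ 2 * M * α (m+1) := by
          split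
          · exact le_refl _
          · exact mul_nonneg (by positivity) (hα0 (m+1))
        have hring : 2 * M * ((∑ j ∈ Finset.Icc 1 m, α j) + α (m+1))
            = 2 * M * (∑ j ∈ Finset.Icc 1 m, α j) + 2 * M * α (m+1) := by ring
        rw [hsum_succ, hring]
        linarith [hbd ω, h, hif]
      have hδk : Measurable fun ω => ‖x (m+1) ω - x' (m+1) ω‖ := (hxm.sub hx'm).norm
      have hδk1 : Measurable fun ω => ‖x (m+1+1) ω - x' (m+1+1) ω‖ := (hxm1.sub hx'm1).norm
      have hintk : Integrable (fun ω => ‖x (m+1) ω - x' (m+1) ω‖) P := by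
        apply (integrable_const (2 * M * ∑ j ∈ Finset.Icc 1 m, α j)).mono'
          hδk.aestronglyMeasurable
        exact ae_of_all _ fun ω => by
          rw [Real.norm_eq_abs, abs_of_nonneg (norm_nonneg _)]; exact hbd ω
      have hintk1 : Integrable (fun ω => ‖x (m+1+1) ω - x' (m+1+1) ω‖) P := by
        apply (integrable_const (2 * M * ∑ j ∈ Finset.Icc 1 (m+1), α j)).mono'
          hδk1.aestronglyMeasurable
        exact ae_of_all _ fun ω => by
          rw [Real.norm_eq_abs, abs_of_nonneg (norm_nonneg _)]; exact hbd1 ω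
      have hs_meas : MeasurableSet {ω | I (m+1) ω = j₀} :=
        hI_meas (m+1) (measurableSet_singleton j₀)
      have hind : Integrable
          (fun ω => Set.indicator {ω | I (m+1) ω = j₀} (fun _ => 2 * M * α (m+1)) ω) P :=
        (integrable_const (2 * M * α (m+1))).indicator hs_meas
      have hmono : ∫ ω, ‖x (m+1+1) ω - x' (m+1+1) ω‖ ∂P
          ≤ ∫ ω, (‖x (m+1) ω - x' (m+1) ω‖
              + Set.indicator {ω | I (m+1) ω = j₀} (fun _ => 2 * M * α (m+1)) ω) ∂P := by
        apply integral_mono hintk1 (hintk.add hind)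
        intro ω
        have h := hstep (m+1) hk1 hkK ω
        simp only [Pi.add_apply, Set.indicator_apply, Set.mem_setOf_eq]
        exact h
      have hval : ∫ ω, (‖x (m+1) ω - x' (m+1) ω‖
            + Set.indicator {ω | I (m+1) ω = j₀} (fun _ => 2 * M * α (m+1)) ω) ∂P
          = (∫ ω, ‖x (m+1) ω - x' (m+1) ω‖ ∂P) + (2 * M * α (m+1)) * (n:ℝ)⁻¹ := by
        rw [integral_add hintk hind, integral_indicator_const _ hs_meas, measureReal_def, hI_unif (m+1) j₀]
        rw [ENNReal.toReal_inv, ENNReal.toReal_natCast, smul_eq_mul]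
        ring
      refine ⟨hxm1, hx'm1, hbd1, ?_⟩
      have hring2 : (2 * M / n) * ((∑ j ∈ Finset.Icc 1 m, α j) + α (m+1))
          = (2 * M / n) * (∑ j ∈ Finset.Icc 1 m, α j) + (2 * M * α (m+1)) * (n:ℝ)⁻¹ := by
        field_simp
      rw [hsum_succ, hring2]
      linarith [hmono, hval ▸ hmono, hint]
  -- conclusion
  intro ξ
  obtain ⟨hxK, hx'K, hbdK, hintK⟩ := main K le_rfl
  have hcont : Continuous (fun v : EuclideanSpace ℝ (Fin d) => f v ξ) := by
    have : LipschitzWith (Real.toNNReal M) (fun v : EuclideanSpace ℝ (Fin d) => f v ξ) := by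
      apply LipschitzWith.of_dist_le_mul
      intro a b
      rw [Real.dist_eq, dist_eq_norm, Real.coe_toNNReal _ hM.le]
      exact hlip ξ a b
    exact this.continuous
  have hfmeas : Measurable fun ω => |f (x (K+1) ω) ξ - f (x' (K+1) ω) ξ| :=
    ((hcont.measurable.comp hxK).sub (hcont.measurable.comp hx'K)).abs
  have hfb : ∀ ω, |f (x (K+1) ω) ξ - f (x' (K+1) ω) ξ| ≤ M * ‖x (K+1) ω - x' (K+1) ω‖ :=
    fun ω => hlip ξ _ _
  have hIδ : Integrable (fun ω => ‖x (K+1) ω - x' (K+1) ω‖) P := by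
    apply (integrable_const (2 * M * ∑ j ∈ Finset.Icc 1 K, α j)).mono'
      ((hxK.sub hx'K).norm).aestronglyMeasurable
    exact ae_of_all _ fun ω => by
      rw [Real.norm_eq_abs, abs_of_nonneg (norm_nonneg _)]; exact hbdK ω
  have hIf : Integrable (fun ω => |f (x (K+1) ω) ξ - f (x' (K+1) ω) ξ|) P := by
    apply (integrable_const (M * (2 * M * ∑ j ∈ Finset.Icc 1 K, α j))).mono'
      hfmeas.aestronglyMeasurable
    apply ae_of_all _ fun ω => ?_
    rw [Real.norm_eq_abs, abs_of_nonneg (abs_nonneg _)]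
    exact le_trans (hfb ω) (mul_le_mul_of_nonneg_left (hbdK ω) hM.le)
  calc ∫ ω, |f (x (K+1) ω) ξ - f (x' (K+1) ω) ξ| ∂P
      ≤ ∫ ω, M * ‖x (K+1) ω - x' (K+1) ω‖ ∂P :=
        integral_mono hIf (hIδ.const_mul M) hfb
    _ = M * ∫ ω, ‖x (K+1) ω - x' (K+1) ω‖ ∂P := integral_const_mul M _
    _ ≤ M * ((2 * M / n) * ∑ j ∈ Finset.Icc 1 K, α j) :=
        mul_le_mul_of_nonneg_left hintK hM.le
    _ = (2 * M ^ 2 / n) * ∑ k ∈ Finset.Icc 1 K, α k := by ring
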